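/- For λ > 0 and z < 0 sufficiently negative, the univariate skew normal cdf F(z) = ∫_{-∞}^z 2φ(t)Φ(λt) dt satisfies the two-sided bound: (1/π) e^{-(1+λ²)z²/2} [ z^{-2}/(λ(1+λ²)) - (2/(λ(1+λ²)) + 1/(λ³(1+λ²))) z^{-4} ] < F(z) < (1/π) e^{-(1+λ²)z²/2} · z^{-2}/(λ(1+λ²)). -/

import Mathlib

open Real MeasureTheory Filter Set

open Topology

noncomputable def stdNormalPdf (t : ℝ) : ℝ := (Real.sqrt (2 * π))⁻¹ * Real.exp (-t ^ 2 / 2)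

noncomputable def stdNormalCdf (z : ℝ) : ℝ := ∫ t in Set.Iic z, stdNormalPdf t

/-- The skew normal SN(l) cdf, F(z) = ∫_{-∞}^z 2 φ(t) Φ(l t) dt. -/
noncomputable def skewNormalCdf (l z : ℝ) : ℝ :=
  ∫ t in Set.Iic z, 2 * stdNormalPdf t * stdNormalCdf (l * t)

noncomputable def Ef (a t : ℝ) : ℝ := Real.exp (-a * t ^ 2 / 2)

lemma pdf_pos (t : ℝ) : 0 < stdNormalPdf t := by
  unfold stdNormalPdf
  positivity

lemma pdf_cont : Continuous stdNormalPdf := by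
  unfold stdNormalPdf; fun_prop

lemma pdf_le (t : ℝ) : stdNormalPdf t ≤ (Real.sqrt (2 * π))⁻¹ := by
  unfold stdNormalPdf
  nlinarith [Real.exp_le_one_iff.2 (by nlinarith [sq_nonneg t] : -t^2/2 ≤ 0),
    inv_nonneg.2 (Real.sqrt_nonneg (2*π)), Real.exp_pos (-t^2/2)]

lemma pdf_integrable : Integrable stdNormalPdf := by
  have h : Integrable (fun t : ℝ => Real.exp (-(1/2 : ℝ) * t ^ 2)) := integrable_exp_neg_mul_sq (by norm_num)
  have := h.const_mul ((Real.sqrt (2 * π))⁻¹)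
  refine this.congr (by filter_upwards with t; unfold stdNormalPdf; ring_nf)

lemma pdf_hasDeriv (t : ℝ) : HasDerivAt stdNormalPdf (-t * stdNormalPdf t) t := by
  unfold stdNormalPdf
  have h1 : HasDerivAt (fun t : ℝ => -t ^ 2 / 2) (-t) t := by
    have h := ((hasDerivAt_pow 2 t).neg).div_const 2
    have e : (-((2:ℕ) * t ^ (2-1)) / 2 : ℝ) = -t := by push_cast; ring
    rw [e] at h; exact h
  have h2 := (h1.exp).const_mul ((Real.sqrt (2 * π))⁻¹)
  have : (Real.sqrt (2*π))⁻¹ * (Real.exp (-t^2/2) * (-t)) = -t * ((Real.sqrt (2*π))⁻¹ * Real.exp (-t^2/2)) := by ring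
  rw [this] at h2; exact h2

lemma sq_tendsto_atBot : Tendsto (fun t : ℝ => t ^ 2) atBot atTop := by
  have h := (tendsto_pow_atTop (n := 2) (two_ne_zero)).comp tendsto_neg_atBot_atTop (α := ℝ)
  have : ∀ t : ℝ, ((fun x : ℝ => x ^ 2) ∘ fun x : ℝ => -x) t = t ^ 2 := fun t => by
    simp [Function.comp]
  exact h.congr this

lemma exp_neg_mul_sq_tendsto {c : ℝ} (hc : 0 < c) :
    Tendsto (fun t : ℝ => Real.exp (-c * t ^ 2 / 2)) atBot (𝓝 0) := by
  apply Real.tendsto_exp_atBot.comp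
  have h2 := sq_tendsto_atBot.const_mul_atTop (show (0:ℝ) < c/2 by positivity)
  have h3 := tendsto_neg_atBot_iff.mpr h2
  exact h3.congr fun t => by ring

lemma pdf_tendsto : Tendsto stdNormalPdf atBot (𝓝 0) := by
  have h := (exp_neg_mul_sq_tendsto one_pos).const_mul ((Real.sqrt (2*π))⁻¹)
  rw [mul_zero] at h
  refine h.congr fun t => by unfold stdNormalPdf; ring_nf


lemma inv_tendsto_atBot_zero : Tendsto (fun t : ℝ => t⁻¹) atBot (𝓝 0) := by
  have h := (tendsto_neg_atBot_atTop : Tendsto (fun x:ℝ => -x) atBot atTop).inv_tendsto_atTop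
  have h2 := h.neg
  rw [neg_zero] at h2
  exact h2.congr fun t => by simp [Pi.inv_apply, inv_neg]

lemma abs_inv_le {t x : ℝ} (ht : t ≤ x) (hx : x < 0) : |t⁻¹| ≤ |x⁻¹| := by
  rw [abs_inv, abs_inv]
  have h1 : |x| ≤ |t| := by rw [abs_of_neg hx, abs_of_neg (ht.trans_lt hx)]; linarith
  exact inv_anti₀ (abs_pos.2 hx.ne) h1

lemma inv_sq_le {t x : ℝ} (ht : t ≤ x) (hx : x < 0) {n : ℕ} (hn : Even n) :
    (t⁻¹) ^ n ≤ (x⁻¹) ^ n := by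
  rw [← hn.pow_abs, ← hn.pow_abs x⁻¹]
  exact pow_le_pow_left₀ (abs_nonneg _) (abs_inv_le ht hx) n

/-- integrability of `pdf * r` on `Iic x` for bounded continuous-on `r`. -/
lemma integrableOn_pdf_mul {x : ℝ} {r : ℝ → ℝ} (hr : ContinuousOn r (Iic x)) {C : ℝ}
    (hC : ∀ t ∈ Iic x, |r t| ≤ C) :
    IntegrableOn (fun t => stdNormalPdf t * r t) (Iic x) := by
  refine Integrable.mono' ((pdf_integrable.const_mul C).integrableOn)
    ((pdf_cont.continuousOn.mul hr).aestronglyMeasurable measurableSet_Iic) ?_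
  refine (ae_restrict_iff' measurableSet_Iic).2 (ae_of_all _ fun t ht => ?_)
  rw [Real.norm_eq_abs, abs_mul, abs_of_pos (pdf_pos t)]
  calc stdNormalPdf t * |r t| ≤ stdNormalPdf t * C := by
        exact mul_le_mul_of_nonneg_left (hC t ht) (pdf_pos t).le
    _ = C * stdNormalPdf t := by ring

lemma setIntegral_pos' {x : ℝ} {f : ℝ → ℝ} (hf : ∀ t ∈ Iic x, 0 < f t)
    (hi : IntegrableOn f (Iic x)) : 0 < ∫ t in Iic x, f t := by
  rw [setIntegral_pos_iff_support_of_nonneg_ae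
    ((ae_restrict_iff' measurableSet_Iic).2 (ae_of_all _ fun t ht => (hf t ht).le)) hi]
  have hsub : Iic x ⊆ Function.support f ∩ Iic x := fun t ht => ⟨(hf t ht).ne', ht⟩
  have := measure_mono (μ := (volume : Measure ℝ)) hsub
  rw [Real.volume_Iic] at this
  exact lt_of_lt_of_le (by norm_num : (0 : ENNReal) < ⊤) this

lemma mills_upper {x : ℝ} (hx : x < 0) : stdNormalCdf x < stdNormalPdf x * (-x⁻¹) := by
  have hC2 : ∀ t ∈ Iic x, |(t⁻¹)^2| ≤ (x⁻¹)^2 := fun t ht => by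
    rw [abs_of_nonneg (by positivity)]; exact inv_sq_le ht hx (by norm_num)
  have hcont2 : ContinuousOn (fun t : ℝ => (t⁻¹)^2) (Iic x) :=
    ((continuousOn_inv₀.mono (fun t (ht : t ∈ Iic x) => (ne_of_lt (ht.trans_lt hx) : t ≠ 0))).pow 2)
  have int2 : IntegrableOn (fun t => stdNormalPdf t * (t⁻¹)^2) (Iic x) :=
    integrableOn_pdf_mul hcont2 hC2
  have int1 : IntegrableOn (fun t => stdNormalPdf t * (1 + (t⁻¹)^2)) (Iic x) := by
    refine integrableOn_pdf_mul (continuousOn_const.add hcont2) (C := 1 + (x⁻¹)^2)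
      (fun t ht => ?_)
    rw [abs_of_nonneg (by positivity)]
    have := hC2 t ht
    rw [abs_of_nonneg (by positivity)] at this
    linarith
  have hFTC : ∫ t in Iic x, stdNormalPdf t * (1 + (t⁻¹)^2)
      = stdNormalPdf x * (-x⁻¹) - 0 := by
    apply integral_Iic_of_hasDerivAt_of_tendsto
    · exact (pdf_cont.continuousAt.mul ((continuousAt_inv₀ hx.ne).neg)).continuousWithinAt
    · intro t ht
      have ht0 : t ≠ 0 := ne_of_lt (ht.out.trans hx)
      have h := (pdf_hasDeriv t).mul ((hasDerivAt_inv ht0).neg)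
      have e : stdNormalPdf t * (1 + (t⁻¹)^2)
          = -t * stdNormalPdf t * -t⁻¹ + stdNormalPdf t * - -(t^2)⁻¹ := by
        field_simp
      rw [e]; exact h
    · exact int1
    · have h := pdf_tendsto.mul inv_tendsto_atBot_zero.neg
      rw [show (0:ℝ) = 0 * -0 by norm_num]
      exact h
  have hpos : 0 < ∫ t in Iic x, stdNormalPdf t * (t⁻¹)^2 :=
    setIntegral_pos' (fun t ht => by
      have ht0 : t ≠ 0 := ne_of_lt (lt_of_le_of_lt ht hx)
      exact mul_pos (pdf_pos t) (by positivity)) int2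
  have hsplit : stdNormalCdf x
      = (∫ t in Iic x, stdNormalPdf t * (1 + (t⁻¹)^2)) - ∫ t in Iic x, stdNormalPdf t * (t⁻¹)^2 := by
    rw [← integral_sub int1 int2]
    exact setIntegral_congr_fun measurableSet_Iic fun t _ => by ring
  rw [hsplit, hFTC]
  linarith

lemma mills_lower {x : ℝ} (hx : x < 0) :
    stdNormalPdf x * (-x⁻¹ + (x⁻¹)^3) < stdNormalCdf x := by
  have hC4 : ∀ t ∈ Iic x, |3 * (t⁻¹)^4| ≤ 3 * (x⁻¹)^4 := fun t ht => by
    rw [abs_of_nonneg (by positivity)]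
    have := inv_sq_le ht hx (n := 4) ⟨2, by norm_num⟩
    linarith
  have hcont4 : ContinuousOn (fun t : ℝ => 3 * (t⁻¹)^4) (Iic x) :=
    (((continuousOn_inv₀.mono (fun t (ht : t ∈ Iic x) => (ne_of_lt (ht.trans_lt hx) : t ≠ 0))).pow 4).const_smul (3:ℝ))
  have int4 : IntegrableOn (fun t => stdNormalPdf t * (3 * (t⁻¹)^4)) (Iic x) :=
    integrableOn_pdf_mul hcont4 hC4
  have int1 : IntegrableOn (fun t => stdNormalPdf t * (1 - 3 * (t⁻¹)^4)) (Iic x) := by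
    refine integrableOn_pdf_mul (continuousOn_const.sub hcont4) (C := 1 + 3 * (x⁻¹)^4)
      (fun t ht => ?_)
    have h := hC4 t ht
    rw [abs_of_nonneg (by positivity)] at h
    have h0 : (0:ℝ) ≤ 3 * (t⁻¹)^4 := by positivity
    rw [abs_le]
    constructor <;> nlinarith
  have hFTC : ∫ t in Iic x, stdNormalPdf t * (1 - 3 * (t⁻¹)^4)
      = stdNormalPdf x * (-x⁻¹ + (x⁻¹)^3) - 0 := by
    apply integral_Iic_of_hasDerivAt_of_tendsto
    · refine (pdf_cont.continuousAt.mul ?_).continuousWithinAt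
      exact ((continuousAt_inv₀ hx.ne).neg).add (((continuousAt_inv₀ hx.ne)).pow 3)
    · intro t ht
      have ht0 : t ≠ 0 := ne_of_lt (ht.out.trans hx)
      have h := (pdf_hasDeriv t).mul
        (((hasDerivAt_inv ht0).neg).add (((hasDerivAt_inv ht0)).pow 3))
      have e : stdNormalPdf t * (1 - 3 * (t⁻¹)^4)
          = -t * stdNormalPdf t * (-t⁻¹ + (t⁻¹)^3)
            + stdNormalPdf t * (- -(t^2)⁻¹ + ↑3 * t⁻¹ ^ (3-1) * -(t^2)⁻¹) := by
        field_simp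
        have h2 : t ^ 2 * t⁻¹ ^ 2 = 1 := by rw [← mul_pow, mul_inv_cancel₀ ht0, one_pow]
        linear_combination (stdNormalPdf t * 3) * h2
      rw [e]; exact h
    · exact int1
    · have h := pdf_tendsto.mul (inv_tendsto_atBot_zero.neg.add (inv_tendsto_atBot_zero.pow 3))
      rw [show (0:ℝ) = 0 * (-0 + 0^3) by norm_num]
      exact h
  have hpos : 0 < ∫ t in Iic x, stdNormalPdf t * (3 * (t⁻¹)^4) :=
    setIntegral_pos' (fun t ht => by
      have ht0 : t ≠ 0 := ne_of_lt (lt_of_le_of_lt ht hx)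
      exact mul_pos (pdf_pos t) (by positivity)) int4
  have hsplit : stdNormalCdf x
      = (∫ t in Iic x, stdNormalPdf t * (1 - 3 * (t⁻¹)^4)) + ∫ t in Iic x, stdNormalPdf t * (3 * (t⁻¹)^4) := by
    rw [← integral_add int1 int4]
    exact setIntegral_congr_fun measurableSet_Iic fun t _ => by ring
  rw [hsplit, hFTC]
  linarith


lemma cdf_mono : Monotone stdNormalCdf := by
  intro x y hxy
  exact setIntegral_mono_set pdf_integrable.integrableOn
    (ae_of_all _ fun t => (pdf_pos t).le) (HasSubset.Subset.eventuallyLE (Iic_subset_Iic.2 hxy))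

lemma cdf_nonneg (x : ℝ) : 0 ≤ stdNormalCdf x :=
  setIntegral_nonneg measurableSet_Iic fun t _ => (pdf_pos t).le

lemma pdf_total : ∫ t, stdNormalPdf t = 1 := by
  unfold stdNormalPdf
  rw [integral_const_mul]
  have h : ∫ t : ℝ, Real.exp (-(1/2 : ℝ) * t ^ 2) = Real.sqrt (π / (1/2)) :=
    integral_gaussian (1/2)
  have h2 : ∫ t : ℝ, Real.exp (-t ^ 2 / 2) = Real.sqrt (2 * π) := by
    rw [show (2 * π) = π / (1/2) by ring, ← h]
    congr 1 with t
    congr 1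
    ring
  rw [h2]
  exact inv_mul_cancel₀ (ne_of_gt (Real.sqrt_pos.2 (by positivity)))

lemma cdf_le_one (x : ℝ) : stdNormalCdf x ≤ 1 := by
  rw [← pdf_total]
  exact setIntegral_le_integral pdf_integrable (ae_of_all _ fun t => (pdf_pos t).le)


lemma Ef_pos (a t : ℝ) : 0 < Ef a t := Real.exp_pos _
lemma Ef_cont (a : ℝ) : Continuous (Ef a) := by unfold Ef; fun_prop
lemma Ef_tendsto {a : ℝ} (ha : 0 < a) : Tendsto (Ef a) atBot (𝓝 0) := exp_neg_mul_sq_tendsto ha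

lemma Ef_integrable {a : ℝ} (ha : 0 < a) : Integrable (Ef a) := by
  have h : Integrable (fun t : ℝ => Real.exp (-(a/2) * t ^ 2)) :=
    integrable_exp_neg_mul_sq (by positivity)
  exact h.congr (by filter_upwards with t; unfold Ef; ring_nf)

lemma Ef_hasDeriv (a t : ℝ) : HasDerivAt (Ef a) (-a * t * Ef a t) t := by
  unfold Ef
  have h1 : HasDerivAt (fun t : ℝ => -a * t ^ 2 / 2) (-a * t) t := by
    have h := ((hasDerivAt_pow 2 t).const_mul (-a)).div_const 2
    have e : (-a * ((2:ℕ) * t ^ (2-1)) / 2 : ℝ) = -a * t := by push_cast; ring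
    rw [e] at h; exact h
  have h2 := h1.exp
  rw [mul_comm] at h2
  exact h2

/-- Generic integrability of Ef times a degree-5 polynomial in `t⁻¹` on `Iic z`, `z < 0`. -/
lemma integrableOn_Ef_poly {a : ℝ} (ha : 0 < a) {z : ℝ} (hz : z < 0) (c₁ c₂ c₃ c₄ c₅ : ℝ) :
    IntegrableOn (fun t => Ef a t *
      (c₁ * t⁻¹ + c₂ * (t⁻¹)^2 + c₃ * (t⁻¹)^3 + c₄ * (t⁻¹)^4 + c₅ * (t⁻¹)^5)) (Iic z) := by
  set m := |z⁻¹| with hm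
  set C := |c₁| * m + |c₂| * m^2 + |c₃| * m^3 + |c₄| * m^4 + |c₅| * m^5 with hC
  refine Integrable.mono' (((Ef_integrable ha).const_mul C).integrableOn)
    (((Ef_cont a).continuousOn.mul ?_).aestronglyMeasurable measurableSet_Iic) ?_
  · have hne : ∀ t ∈ Iic z, t ≠ 0 := fun t ht => ne_of_lt (lt_of_le_of_lt ht hz)
    have hcinv : ContinuousOn (fun t : ℝ => t⁻¹) (Iic z) := continuousOn_inv₀.mono hne
    fun_prop (disch := intro t ht; exact hne t ht)
  · refine (ae_restrict_iff' measurableSet_Iic).2 (ae_of_all _ fun t ht => ?_)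
    have hu : |t⁻¹| ≤ m := abs_inv_le ht hz
    have habs : ∀ k : ℕ, |t⁻¹ ^ k| ≤ m ^ k := fun k => by
      rw [abs_pow]; exact pow_le_pow_left₀ (abs_nonneg _) hu k
    rw [Real.norm_eq_abs, abs_mul, abs_of_pos (Ef_pos a t), mul_comm]
    refine mul_le_mul_of_nonneg_right ?_ (Ef_pos a t).le
    calc |c₁ * t⁻¹ + c₂ * (t⁻¹)^2 + c₃ * (t⁻¹)^3 + c₄ * (t⁻¹)^4 + c₅ * (t⁻¹)^5|
        ≤ |c₁ * t⁻¹| + |c₂ * (t⁻¹)^2| + |c₃ * (t⁻¹)^3| + |c₄ * (t⁻¹)^4| + |c₅ * (t⁻¹)^5| := by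
          calc _ ≤ |c₁ * t⁻¹ + c₂ * (t⁻¹)^2 + c₃ * (t⁻¹)^3 + c₄ * (t⁻¹)^4| + |c₅ * (t⁻¹)^5| :=
                abs_add_le _ _
            _ ≤ |c₁ * t⁻¹ + c₂ * (t⁻¹)^2 + c₃ * (t⁻¹)^3| + |c₄ * (t⁻¹)^4| + |c₅ * (t⁻¹)^5| := by
                gcongr; exact abs_add_le _ _
            _ ≤ |c₁ * t⁻¹ + c₂ * (t⁻¹)^2| + |c₃ * (t⁻¹)^3| + |c₄ * (t⁻¹)^4| + |c₅ * (t⁻¹)^5| := by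
                gcongr; exact abs_add_le _ _
            _ ≤ |c₁ * t⁻¹| + |c₂ * (t⁻¹)^2| + |c₃ * (t⁻¹)^3| + |c₄ * (t⁻¹)^4| + |c₅ * (t⁻¹)^5| := by
                gcongr; exact abs_add_le _ _
      _ ≤ C := by
          rw [hC]
          have h1 := habs 1
          have h2 := habs 2
          have h3 := habs 3
          have h4 := habs 4
          have h5 := habs 5
          simp only [abs_mul, pow_one] at *
          have hm0 : 0 ≤ m := abs_nonneg _
          have hu0 : 0 ≤ |t⁻¹| := abs_nonneg _
          gcongr <;> exact abs_nonneg _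
  

lemma prod_pdf (l t : ℝ) :
    stdNormalPdf t * stdNormalPdf (l * t) = (2 * π)⁻¹ * Ef (1 + l^2) t := by
  unfold stdNormalPdf Ef
  have h : Real.sqrt (2*π) * Real.sqrt (2*π) = 2*π := Real.mul_self_sqrt (by positivity)
  rw [mul_mul_mul_comm, ← Real.exp_add, ← mul_inv, h]
  congr 1
  ring

/-! Explicit antiderivatives and their derivatives. -/

noncomputable def Uf (l a t : ℝ) : ℝ := Ef a t * ((1/π) * ((t⁻¹)^2 / (l*a)))
noncomputable def DUf (l a t : ℝ) : ℝ :=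
  Ef a t * ((1/π) * (-t⁻¹/l - (2/(l*a)) * (t⁻¹)^3))
noncomputable def gUf (l a t : ℝ) : ℝ := Ef a t * ((1/π) * ((2/(l*a)) * (-((t⁻¹)^3))))
noncomputable def Lf (l a B t : ℝ) : ℝ := Ef a t * ((1/π) * ((t⁻¹)^2/(l*a) - B * (t⁻¹)^4))
noncomputable def DLf (l a B t : ℝ) : ℝ :=
  Ef a t * ((1/π) * (-t⁻¹/l + (a*B - 2/(l*a)) * (t⁻¹)^3 + 4*B * (t⁻¹)^5))
noncomputable def gLf (l a B t : ℝ) : ℝ :=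
  Ef a t * ((1/π) * ((2*l/a) * (-((t⁻¹)^3)) + 4*B * (-((t⁻¹)^5))))

lemma Uf_hasDeriv {l a t : ℝ} (hl : l ≠ 0) (ha : a ≠ 0) (ht : t ≠ 0) :
    HasDerivAt (Uf l a) (DUf l a t) t := by
  have h := (Ef_hasDeriv a t).mul
    ((((hasDerivAt_inv ht).pow 2).div_const (l*a)).const_mul (1/π))
  have e : DUf l a t = -a * t * Ef a t * ((1/π) * ((t⁻¹)^2 / (l*a)))
      + Ef a t * ((1/π) * ((2:ℕ) * t⁻¹ ^ (2-1) * -(t^2)⁻¹ / (l*a))) := by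
    unfold DUf
    have hπ := Real.pi_ne_zero
    push_cast
    field_simp
    ring
  rw [show Uf l a = fun t => Ef a t * ((1/π) * ((t⁻¹)^2 / (l*a))) from rfl, e]
  exact h

lemma Lf_hasDeriv {l a B t : ℝ} (hl : l ≠ 0) (ha : a ≠ 0) (ht : t ≠ 0) :
    HasDerivAt (Lf l a B) (DLf l a B t) t := by
  have h := (Ef_hasDeriv a t).mul
    (((((hasDerivAt_inv ht).pow 2).div_const (l*a)).sub
      (((hasDerivAt_inv ht).pow 4).const_mul B)).const_mul (1/π))
  have e : DLf l a B t = -a * t * Ef a t * ((1/π) * ((t⁻¹)^2/(l*a) - B * (t⁻¹)^4))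
      + Ef a t * ((1/π) * ((2:ℕ) * t⁻¹ ^ (2-1) * -(t^2)⁻¹ / (l*a)
          - B * ((4:ℕ) * t⁻¹ ^ (4-1) * -(t^2)⁻¹))) := by
    unfold DLf
    have hπ := Real.pi_ne_zero
    push_cast
    field_simp
    ring
  rw [show Lf l a B = fun t => Ef a t * ((1/π) * ((t⁻¹)^2/(l*a) - B * (t⁻¹)^4)) from rfl, e]
  exact h

lemma Uf_tendsto {l a : ℝ} (ha : 0 < a) : Tendsto (Uf l a) atBot (𝓝 0) := by
  have h := (Ef_tendsto ha).mul
    (((inv_tendsto_atBot_zero.pow 2).div_const (l*a)).const_mul (1/π))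
  rw [show (0:ℝ) = 0 * ((1/π) * ((0:ℝ)^2 / (l*a))) by norm_num]
  exact h

lemma Lf_tendsto {l a B : ℝ} (ha : 0 < a) : Tendsto (Lf l a B) atBot (𝓝 0) := by
  have h := (Ef_tendsto ha).mul
    ((((inv_tendsto_atBot_zero.pow 2).div_const (l*a)).sub
      ((inv_tendsto_atBot_zero.pow 4).const_mul B)).const_mul (1/π))
  rw [show (0:ℝ) = 0 * ((1/π) * ((0:ℝ)^2 / (l*a) - B * (0:ℝ)^4)) by norm_num]
  exact h

lemma integral_DUf {l a z : ℝ} (hl : l ≠ 0) (ha : 0 < a) (hz : z < 0) :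
    ∫ t in Iic z, DUf l a t = Uf l a z := by
  have h := integral_Iic_of_hasDerivAt_of_tendsto (f := Uf l a) (f' := DUf l a) (a := z)
    (Uf_hasDeriv hl ha.ne' hz.ne).continuousAt.continuousWithinAt
    (fun t ht => Uf_hasDeriv hl ha.ne' (ne_of_lt (ht.out.trans hz)))
    ?_ (Uf_tendsto ha)
  · rw [h, sub_zero]
  · refine (integrableOn_Ef_poly ha hz (-(1/π)/l) 0 (-(1/π)*(2/(l*a))) 0 0).congr_fun
      (fun t _ => ?_) measurableSet_Iic
    unfold DUf; ring

lemma integral_DLf {l a B z : ℝ} (hl : l ≠ 0) (ha : 0 < a) (hz : z < 0) :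
    ∫ t in Iic z, DLf l a B t = Lf l a B z := by
  have h := integral_Iic_of_hasDerivAt_of_tendsto (f := Lf l a B) (f' := DLf l a B) (a := z)
    (Lf_hasDeriv hl ha.ne' hz.ne).continuousAt.continuousWithinAt
    (fun t ht => Lf_hasDeriv hl ha.ne' (ne_of_lt (ht.out.trans hz)))
    ?_ (Lf_tendsto ha)
  · rw [h, sub_zero]
  · refine (integrableOn_Ef_poly ha hz (-(1/π)/l) 0 ((1/π)*(a*B - 2/(l*a))) 0
      ((1/π)*(4*B))).congr_fun (fun t _ => ?_) measurableSet_Iic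
    unfold DLf; ring

lemma F_integrableOn (l z : ℝ) :
    IntegrableOn (fun t => 2 * stdNormalPdf t * stdNormalCdf (l * t)) (Iic z) := by
  have hmeas : AEStronglyMeasurable (fun t => 2 * stdNormalPdf t * stdNormalCdf (l * t)) volume :=
    (((pdf_cont.measurable.const_mul 2)).mul
      (cdf_mono.measurable.comp (measurable_id.const_mul l))).aestronglyMeasurable
  refine (Integrable.mono' (pdf_integrable.const_mul 2) hmeas ?_).integrableOn
  filter_upwards with t
  have h1 := pdf_pos t
  have h2 := cdf_nonneg (l * t)
  have h3 := cdf_le_one (l * t)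
  rw [Real.norm_eq_abs, abs_of_nonneg (by nlinarith)]
  nlinarith

/-- Capitanio-type two-sided tail bound for the skew normal cdf when l > 0,
for z sufficiently negative. -/
theorem skewNormalCdf_tail_bounds (l : ℝ) (hl : 0 < l) :
    ∃ z₀ : ℝ, z₀ < 0 ∧ ∀ z : ℝ, z < z₀ →
      (1 / π) * Real.exp (-(1 + l ^ 2) * z ^ 2 / 2) *
          (z ^ (-2 : ℤ) / (l * (1 + l ^ 2)) -
            (2 / (l * (1 + l ^ 2)) + 1 / (l ^ 3 * (1 + l ^ 2))) * z ^ (-4 : ℤ))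
        < skewNormalCdf l z ∧
      skewNormalCdf l z <
        (1 / π) * Real.exp (-(1 + l ^ 2) * z ^ 2 / 2) * (z ^ (-2 : ℤ) / (l * (1 + l ^ 2))) := by
  refine ⟨-1, by norm_num, fun z hz => ?_⟩
  have hz0 : z < 0 := by linarith
  have ha0 : (0:ℝ) < 1 + l ^ 2 := by positivity
  have hB0 : (0:ℝ) < 2 / (l * (1 + l ^ 2)) + 1 / (l ^ 3 * (1 + l ^ 2)) := by positivity
  have hπ : (0:ℝ) < π := Real.pi_pos
  have hzpow2 : z ^ (-2 : ℤ) = (z⁻¹)^2 := by rw [zpow_neg, inv_pow]; norm_cast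
  have hzpow4 : z ^ (-4 : ℤ) = (z⁻¹)^4 := by rw [zpow_neg, inv_pow]; norm_cast
  have intF := F_integrableOn l z
  -- pointwise facts
  have hptU : ∀ t ∈ Iic z, 2 * stdNormalPdf t * stdNormalCdf (l * t)
      ≤ DUf l (1 + l^2) t - gUf l (1 + l^2) t := by
    intro t ht
    have ht0 : t < 0 := lt_of_le_of_lt ht hz0
    have hlt : l * t < 0 := mul_neg_of_pos_of_neg hl ht0
    have hm := mills_upper hlt
    have hpdf2 : (0:ℝ) ≤ 2 * stdNormalPdf t := by nlinarith [pdf_pos t]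
    have h1 : 2 * stdNormalPdf t * stdNormalCdf (l * t)
        ≤ 2 * stdNormalPdf t * (stdNormalPdf (l * t) * (-(l*t)⁻¹)) :=
      mul_le_mul_of_nonneg_left hm.le hpdf2
    have heq : 2 * stdNormalPdf t * (stdNormalPdf (l * t) * (-(l*t)⁻¹))
        = DUf l (1 + l^2) t - gUf l (1 + l^2) t := by
      have hp : 2 * stdNormalPdf t * (stdNormalPdf (l * t) * (-(l*t)⁻¹))
          = 2 * ((2*π)⁻¹ * Ef (1 + l^2) t) * (-(l*t)⁻¹) := by
        rw [← prod_pdf l t]; ring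
      rw [hp]
      unfold DUf gUf
      have ht0' : t ≠ 0 := ht0.ne
      have hl0 : l ≠ 0 := hl.ne'
      have hA : (1+l^2 : ℝ) ≠ 0 := ha0.ne'
      have hπ0 : π ≠ 0 := hπ.ne'
      rw [mul_inv]
      field_simp
      ring
    linarith
  have hptL : ∀ t ∈ Iic z,
      DLf l (1 + l^2) (2 / (l * (1 + l ^ 2)) + 1 / (l ^ 3 * (1 + l ^ 2))) t
        + gLf l (1 + l^2) (2 / (l * (1 + l ^ 2)) + 1 / (l ^ 3 * (1 + l ^ 2))) t
      ≤ 2 * stdNormalPdf t * stdNormalCdf (l * t) := by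
    intro t ht
    have ht0 : t < 0 := lt_of_le_of_lt ht hz0
    have hlt : l * t < 0 := mul_neg_of_pos_of_neg hl ht0
    have hm := mills_lower hlt
    have hpdf2 : (0:ℝ) ≤ 2 * stdNormalPdf t := by nlinarith [pdf_pos t]
    have h1 : 2 * stdNormalPdf t * (stdNormalPdf (l * t) * (-((l*t))⁻¹ + (((l*t))⁻¹)^3))
        ≤ 2 * stdNormalPdf t * stdNormalCdf (l * t) :=
      mul_le_mul_of_nonneg_left hm.le hpdf2
    have heq : 2 * stdNormalPdf t * (stdNormalPdf (l * t) * (-((l*t))⁻¹ + (((l*t))⁻¹)^3))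
        = DLf l (1 + l^2) (2 / (l * (1 + l ^ 2)) + 1 / (l ^ 3 * (1 + l ^ 2))) t
          + gLf l (1 + l^2) (2 / (l * (1 + l ^ 2)) + 1 / (l ^ 3 * (1 + l ^ 2))) t := by
      have hp : 2 * stdNormalPdf t * (stdNormalPdf (l * t) * (-((l*t))⁻¹ + (((l*t))⁻¹)^3))
          = 2 * ((2*π)⁻¹ * Ef (1 + l^2) t) * (-((l*t))⁻¹ + (((l*t))⁻¹)^3) := by
        rw [← prod_pdf l t]; ring
      rw [hp]
      unfold DLf gLf
      have ht0' : t ≠ 0 := ht0.ne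
      have hl0 : l ≠ 0 := hl.ne'
      have hA : (1+l^2 : ℝ) ≠ 0 := ha0.ne'
      have hπ0 : π ≠ 0 := hπ.ne'
      rw [mul_inv]
      field_simp
      ring
    linarith
  -- integrability of the comparison functions
  have intDU : IntegrableOn (DUf l (1 + l^2)) (Iic z) := by
    refine (integrableOn_Ef_poly ha0 hz0 (-(1/π)/l) 0 (-(1/π)*(2/(l*(1+l^2)))) 0 0).congr_fun
      (fun t _ => ?_) measurableSet_Iic
    unfold DUf; ring
  have intgU : IntegrableOn (gUf l (1 + l^2)) (Iic z) := by
    refine (integrableOn_Ef_poly ha0 hz0 0 0 (-(1/π)*(2/(l*(1+l^2)))) 0 0).congr_fun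
      (fun t _ => ?_) measurableSet_Iic
    unfold gUf; ring
  have intDL : IntegrableOn
      (DLf l (1 + l^2) (2 / (l * (1 + l ^ 2)) + 1 / (l ^ 3 * (1 + l ^ 2)))) (Iic z) := by
    refine (integrableOn_Ef_poly ha0 hz0 (-(1/π)/l) 0
      ((1/π)*((1+l^2)*(2 / (l * (1 + l ^ 2)) + 1 / (l ^ 3 * (1 + l ^ 2))) - 2/(l*(1+l^2)))) 0
      ((1/π)*(4*(2 / (l * (1 + l ^ 2)) + 1 / (l ^ 3 * (1 + l ^ 2)))))).congr_fun
      (fun t _ => ?_) measurableSet_Iic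
    unfold DLf; ring
  have intgL : IntegrableOn
      (gLf l (1 + l^2) (2 / (l * (1 + l ^ 2)) + 1 / (l ^ 3 * (1 + l ^ 2)))) (Iic z) := by
    refine (integrableOn_Ef_poly ha0 hz0 0 0 (-(1/π)*(2*l/(1+l^2))) 0
      (-(1/π)*(4*(2 / (l * (1 + l ^ 2)) + 1 / (l ^ 3 * (1 + l ^ 2)))))).congr_fun
      (fun t _ => ?_) measurableSet_Iic
    unfold gLf; ring
  -- gaps are positive
  have hgU_pos : 0 < ∫ t in Iic z, gUf l (1 + l^2) t := by
    refine setIntegral_pos' (fun t ht => ?_) intgU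
    have ht0 : t < 0 := lt_of_le_of_lt ht hz0
    have hu : t⁻¹ < 0 := inv_neg''.2 ht0
    have hu3 : (t⁻¹)^3 < 0 := Odd.pow_neg ⟨1, by norm_num⟩ hu
    unfold gUf
    have h1 : (0:ℝ) < (2/(l*(1+l^2))) * (-((t⁻¹)^3)) := by
      apply mul_pos (by positivity); linarith
    have := Ef_pos (1+l^2) t
    positivity
  have hgL_pos : 0 < ∫ t in Iic z,
      gLf l (1 + l^2) (2 / (l * (1 + l ^ 2)) + 1 / (l ^ 3 * (1 + l ^ 2))) t := by
    refine setIntegral_pos' (fun t ht => ?_) intgL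
    have ht0 : t < 0 := lt_of_le_of_lt ht hz0
    have hu : t⁻¹ < 0 := inv_neg''.2 ht0
    have hu3 : (t⁻¹)^3 < 0 := Odd.pow_neg ⟨1, by norm_num⟩ hu
    have hu5 : (t⁻¹)^5 < 0 := Odd.pow_neg ⟨2, by norm_num⟩ hu
    unfold gLf
    have h1 : (0:ℝ) < (2*l/(1+l^2)) * (-((t⁻¹)^3)) := by
      apply mul_pos (by positivity); linarith
    have h2 : (0:ℝ) < 4*(2 / (l * (1 + l ^ 2)) + 1 / (l ^ 3 * (1 + l ^ 2))) * (-((t⁻¹)^5)) := by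
      apply mul_pos (by positivity); linarith
    have := Ef_pos (1+l^2) t
    positivity
  -- upper bound
  have hU : skewNormalCdf l z < Uf l (1 + l^2) z := by
    have h1 : skewNormalCdf l z
        ≤ ∫ t in Iic z, (DUf l (1 + l^2) t - gUf l (1 + l^2) t) := by
      unfold skewNormalCdf
      exact setIntegral_mono_on intF (intDU.sub intgU) measurableSet_Iic hptU
    have h2 : ∫ t in Iic z, (DUf l (1 + l^2) t - gUf l (1 + l^2) t)
        = (∫ t in Iic z, DUf l (1 + l^2) t) - ∫ t in Iic z, gUf l (1 + l^2) t :=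
      integral_sub intDU intgU
    rw [h2, integral_DUf hl.ne' ha0 hz0] at h1
    linarith
  -- lower bound
  have hL : Lf l (1 + l^2) (2 / (l * (1 + l ^ 2)) + 1 / (l ^ 3 * (1 + l ^ 2))) z
      < skewNormalCdf l z := by
    have h1 : ∫ t in Iic z,
        (DLf l (1 + l^2) (2 / (l * (1 + l ^ 2)) + 1 / (l ^ 3 * (1 + l ^ 2))) t
          + gLf l (1 + l^2) (2 / (l * (1 + l ^ 2)) + 1 / (l ^ 3 * (1 + l ^ 2))) t)
        ≤ skewNormalCdf l z := by
      unfold skewNormalCdf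
      exact setIntegral_mono_on (intDL.add intgL) intF measurableSet_Iic hptL
    have h2 := integral_add intDL intgL
    rw [h2, integral_DLf hl.ne' ha0 hz0] at h1
    linarith
  constructor
  · refine lt_of_le_of_lt (le_of_eq ?_) hL
    unfold Lf Ef
    rw [hzpow2, hzpow4]
    ring
  · refine lt_of_lt_of_le hU (le_of_eq ?_)
    unfold Uf Ef
    rw [hzpow2]
    ring
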